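/- In PolyCDwA with exact line-search steps, if at inner step i of outer iteration t the chosen step size satisfies α_{t,i} = -γ_{t,i} (the maximal away step), then λ_i^{t,M} = 0, i.e., vertex i is not in the vertex-support of x^{t,M}; consequently, for any j₁ in the vertex-support V^{t,M} = {j : λ_j^{t,M} > 0}, the line-search optimality yields ⟨∇f(x^{t,j₁}), v^{j₁} - x^{t,j₁}⟩ = 0. -/

import Mathlib

open scoped RealInnerProductSpace

theorem stmt18 {d : ℕ} (M : ℕ) (hM : 1 ≤ M)
    (v : ℕ → EuclideanSpace ℝ (Fin d))
    (f : EuclideanSpace ℝ (Fin d) → ℝ)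
    (g : EuclideanSpace ℝ (Fin d) → EuclideanSpace ℝ (Fin d))
    (hgrad : ∀ y, HasGradientAt f (g y) y)
    (x : ℕ → ℕ → EuclideanSpace ℝ (Fin d))
    (lam : ℕ → ℕ → ℕ → ℝ) (α : ℕ → ℕ → ℝ)
    (hinit_nonneg : ∀ j ∈ Finset.Icc 1 M, 0 ≤ lam 0 0 j)
    (hinit_sum : ∑ j ∈ Finset.Icc 1 M, lam 0 0 j = 1)
    (hinit_x : x 0 0 = ∑ j ∈ Finset.Icc 1 M, lam 0 0 j • v j)
    (hcycle_x : ∀ s, x (s + 1) 0 = x s M)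
    (hcycle_lam : ∀ s j, lam (s + 1) 0 j = lam s M j)
    (hstep : ∀ s, ∀ i, 1 ≤ i → i ≤ M →
      (α s i ≤ 1 ∧ (-(α s i)) * (1 - lam s (i - 1) i) ≤ lam s (i - 1) i) ∧
      x s i = x s (i - 1) + α s i • (v i - x s (i - 1)) ∧
      lam s i i = (1 - α s i) * lam s (i - 1) i + α s i ∧
      (∀ j, j ≠ i → lam s i j = (1 - α s i) * lam s (i - 1) j) ∧
      (∀ β : ℝ, β ≤ 1 → (-β) * (1 - lam s (i - 1) i) ≤ lam s (i - 1) i →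
        f (x s i) ≤ f (x s (i - 1) + β • (v i - x s (i - 1)))))
    (t : ℕ) :
    (∀ i, 1 ≤ i → i ≤ M → lam t (i - 1) i < 1 →
      α t i = -(lam t (i - 1) i / (1 - lam t (i - 1) i)) → lam t M i = 0) ∧
    (∀ j₁, 1 ≤ j₁ → j₁ ≤ M → 0 < lam t M j₁ →
      ⟪g (x t j₁), v j₁ - x t j₁⟫ = 0) := by
  constructor
  · intro i hi1 hiM hlt hα
    have hne : (1 : ℝ) - lam t (i - 1) i ≠ 0 := by linarith
    have h0 : lam t i i = 0 := by
      have h := (hstep t i hi1 hiM).2.2.1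
      rw [h, hα]
      field_simp
      ring
    -- propagate zero forward
    have hprop : ∀ n, i + n ≤ M → lam t (i + n) i = 0 := by
      intro n
      induction n with
      | zero => intro _; simpa using h0
      | succ n ih =>
        intro hn
        have hk : i + n ≤ M := by omega
        have h1k : 1 ≤ i + (n + 1) := by omega
        have := (hstep t (i + (n + 1)) h1k (by omega)).2.2.2.1 i (by omega)
        rw [show i + (n + 1) - 1 = i + n by omega] at this
        rw [this, ih hk, mul_zero]
    have := hprop (M - i) (by omega)
    rwa [show i + (M - i) = M by omega] at this
  · intro j₁ hj1 hjM hpos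
    -- back-propagate positivity to step j₁
    have hback : ∀ n, j₁ + n ≤ M → 0 < lam t (j₁ + n) j₁ → 0 < lam t j₁ j₁ := by
      intro n
      induction n with
      | zero => intro _ h; simpa using h
      | succ n ih =>
        intro hn h
        have h1k : 1 ≤ j₁ + (n + 1) := by omega
        have hst := hstep t (j₁ + (n + 1)) h1k (by omega)
        have heq := hst.2.2.2.1 j₁ (by omega)
        rw [show j₁ + (n + 1) - 1 = j₁ + n by omega] at heq
        have hα1 : α t (j₁ + (n + 1)) ≤ 1 := hst.1.1
        rw [heq] at h
        have : 0 < lam t (j₁ + n) j₁ := by nlinarith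
        exact ih (by omega) this
    have hposj : 0 < lam t j₁ j₁ := by
      have h := hback (M - j₁) (by omega)
      rw [show j₁ + (M - j₁) = M by omega] at h
      exact h hpos
    obtain ⟨⟨hα1, hαlow⟩, hx, hlami, hlamj, hls⟩ := hstep t j₁ hj1 hjM
    set a := x t (j₁ - 1) with ha
    set D := v j₁ - a with hD
    set L := lam t (j₁ - 1) j₁ with hL
    set A := α t j₁ with hA
    have hvx : v j₁ - x t j₁ = (1 - A) • D := by
      rw [hx]; module
    rcases eq_or_lt_of_le hα1 with heq | hlt
    · rw [hvx, ← heq]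
      simp
    · -- strict lower bound: from hlami and hposj
      have hstrict : (-A) * (1 - L) < L := by
        rw [hlami] at hposj; nlinarith
      -- derivative of the line function
      have hLder : HasDerivAt (fun β : ℝ => a + β • D) D A := by
        simpa using ((hasDerivAt_id A).smul_const D).const_add a
      have hxeq : x t j₁ = a + A • D := hx
      have hφ : HasDerivAt (fun β : ℝ => f (a + β • D)) (⟪g (x t j₁), D⟫) A := by
        have h := (hgrad (a + A • D)).hasFDerivAt.comp_hasDerivAt A hLder
        rw [← hxeq] at h
        exact h
      have hloc : IsLocalMin (fun β : ℝ => f (a + β • D)) A := by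
        have h1 : ∀ᶠ β : ℝ in nhds A, β < 1 := eventually_lt_nhds hlt
        have h2 : ∀ᶠ β : ℝ in nhds A, (-β) * (1 - L) < L := by
          have hc : Continuous fun β : ℝ => (-β) * (1 - L) :=
            continuous_id.neg.mul continuous_const
          exact hc.continuousAt.eventually_lt continuousAt_const hstrict
        filter_upwards [h1, h2] with β hb1 hb2
        have := hls β hb1.le hb2.le
        simpa [← hxeq] using this
      have hzero := hloc.hasDerivAt_eq_zero hφ
      rw [hvx, real_inner_smul_right, hzero, mul_zero]
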